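/- For every nonnegative integer n and real x > 0, I_n(x) := √π·∫₀^∞ μ^{2n}·e^{−μ²/x}·erf(μ) dμ = n!·x^{n+1}·₂F₁(n+1, 1/2; 3/2; −x). -/

import Mathlib

open MeasureTheory Real

/-- The error function. -/
noncomputable def erf (x : ℝ) : ℝ := (2 / Real.sqrt π) * ∫ t in (0:ℝ)..x, Real.exp (-t ^ 2)

/-- The Gauss hypergeometric function ₂F₁(a, 1/2; 3/2; z), via its Euler-type integral
representation `∫₀¹ (1 - z t²)^(-a) dt`, which agrees with the analytic continuation of the
hypergeometric series for negative real argument `z`. -/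
noncomputable def hyp2F1half (a z : ℝ) : ℝ := ∫ t in (0:ℝ)..1, (1 - z * t ^ 2) ^ (-a)

lemma moment (n : ℕ) {a : ℝ} (ha : 0 < a) :
    ∫ μ in Set.Ioi (0:ℝ), μ ^ (2*n+1) * Real.exp (-a * μ^2)
      = n.factorial / (2 * a ^ (n+1)) := by
  have h2 : (0:ℝ) < 2 := two_pos
  have key := MeasureTheory.integral_comp_rpow_Ioi_of_pos
    (g := fun u : ℝ => (1/2) * (u ^ n * Real.exp (-(a * u)))) h2
  have h1 : ∀ μ ∈ Set.Ioi (0:ℝ),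
      ((2:ℝ) * μ ^ ((2:ℝ) - 1)) • ((1/2) * ((μ ^ (2:ℝ)) ^ n * Real.exp (-(a * μ ^ (2:ℝ)))))
        = μ ^ (2*n+1) * Real.exp (-a * μ^2) := by
    intro μ hμ
    have hμ' : (0:ℝ) < μ := hμ
    rw [show ((2:ℝ) - 1) = 1 by norm_num, Real.rpow_one,
      show ((2:ℝ)) = ((2:ℕ):ℝ) by norm_num, Real.rpow_natCast]
    rw [smul_eq_mul, ← pow_mul]
    ring_nf
  rw [setIntegral_congr_fun measurableSet_Ioi h1] at key
  rw [key]
  rw [MeasureTheory.integral_const_mul]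
  have hg : ∀ u ∈ Set.Ioi (0:ℝ), u ^ ((n:ℝ)+1-1) * Real.exp (-(a*u)) = u ^ n * Real.exp (-(a*u)) := by
    intro u hu
    rw [add_sub_cancel_right, Real.rpow_natCast]
  rw [← setIntegral_congr_fun measurableSet_Ioi hg,
    integral_rpow_mul_exp_neg_mul_Ioi (by positivity) ha]
  rw [show ((n:ℝ)+1) = ((n+1 : ℕ):ℝ) by push_cast; ring, Real.rpow_natCast]
  rw [show ((n+1:ℕ):ℝ) = (n:ℝ)+1 by push_cast; ring, Real.Gamma_nat_eq_factorial]
  rw [div_pow, one_pow]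
  field_simp

theorem stmt_13 (n : ℕ) (x : ℝ) (hx : 0 < x) :
    Real.sqrt π * ∫ μ in Set.Ioi (0:ℝ), μ ^ (2 * n) * Real.exp (-μ ^ 2 / x) * erf μ =
      (n : ℕ).factorial * x ^ (n + 1) * hyp2F1half (n + 1) (-x) := by
  set c : ℝ := x⁻¹ with hc
  have hc0 : 0 < c := inv_pos.mpr hx
  set f : ℝ → ℝ → ℝ := fun μ s => 2 * μ ^ (2*n+1) * Real.exp (-(c + s^2) * μ^2) with hf
  have hFcont : Continuous (Function.uncurry f) := by
    apply Continuous.mul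
    · fun_prop
    · apply Real.continuous_exp.comp
      fun_prop
  -- Step 1: rewrite integrand
  have hsπ : Real.sqrt π ≠ 0 := by positivity
  have step1 : Real.sqrt π * ∫ μ in Set.Ioi (0:ℝ), μ ^ (2 * n) * Real.exp (-μ ^ 2 / x) * erf μ
      = ∫ μ in Set.Ioi (0:ℝ), ∫ s in Set.Ioc (0:ℝ) 1, f μ s := by
    rw [← MeasureTheory.integral_const_mul]
    apply setIntegral_congr_fun measurableSet_Ioi
    intro μ hμ
    have hμ0 : (0:ℝ) < μ := hμ
    have hsub : ∫ t in (0:ℝ)..μ, Real.exp (-t^2)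
        = μ * ∫ s in (0:ℝ)..1, Real.exp (-(s*μ)^2) := by
      rw [intervalIntegral.integral_comp_mul_right (fun t => Real.exp (-t^2)) hμ0.ne']
      simp [smul_eq_mul, mul_comm]
      rw [← mul_assoc, mul_inv_cancel₀ hμ0.ne', one_mul]
    simp only [erf, hf]
    rw [hsub, ← intervalIntegral.integral_of_le zero_le_one]
    have hpt : ∀ s:ℝ, 2 * μ ^ (2*n+1) * Real.exp (-(c + s^2) * μ^2)
        = (Real.sqrt π * (μ ^ (2*n) * Real.exp (-μ^2/x) * (2/Real.sqrt π * μ))) * Real.exp (-(s*μ)^2) := by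
      intro s
      rw [show -(c + s^2)*μ^2 = -μ^2/x + (-(s*μ)^2) by rw [hc]; field_simp; ring, Real.exp_add]
      field_simp
      ring
    simp_rw [hpt]
    rw [intervalIntegral.integral_const_mul]
    ring
  rw [step1]
  -- integrability on product
  have hbound : IntegrableOn (fun μ : ℝ => 2 * μ ^ (2*n+1) * Real.exp (-c * μ^2)) (Set.Ioi 0) := by
    have h := (integrable_rpow_mul_exp_neg_mul_sq hc0
      (s := (2*n+1 : ℝ)) (by have h := Nat.cast_nonneg (α := ℝ) n; linarith)).integrableOn
      (s := Set.Ioi 0)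
    refine MeasureTheory.IntegrableOn.congr_fun (h.const_mul 2) (fun μ hμ => ?_) measurableSet_Ioi
    have hμ0 : (0:ℝ) < μ := hμ
    rw [show ((2*n+1 : ℝ)) = ((2*n+1 : ℕ):ℝ) by push_cast; ring,
      Real.rpow_natCast]
    ring
  haveI : IsFiniteMeasure (volume.restrict (Set.Ioc (0:ℝ) 1)) :=
    ⟨by rw [Measure.restrict_apply_univ]; simp [Real.volume_Ioc]⟩
  have hInt : Integrable (Function.uncurry f)
      ((volume.restrict (Set.Ioi (0:ℝ))).prod (volume.restrict (Set.Ioc (0:ℝ) 1))) := by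
    rw [MeasureTheory.integrable_prod_iff hFcont.aestronglyMeasurable]
    constructor
    · refine Filter.Eventually.of_forall fun μ => ?_
      exact (hFcont.comp (Continuous.prodMk_right μ)).integrableOn_Ioc
    · apply MeasureTheory.Integrable.mono' hbound
      · exact (hFcont.norm.aestronglyMeasurable).integral_prod_right'
      · rw [MeasureTheory.ae_restrict_iff' measurableSet_Ioi]
        refine Filter.Eventually.of_forall fun μ hμ => ?_
        have hμ0 : (0:ℝ) < μ := hμ
        have hC : ∀ᵐ s ∂(volume.restrict (Set.Ioc (0:ℝ) 1)),
            ‖‖Function.uncurry f (μ, s)‖‖ ≤ 2 * μ ^ (2*n+1) * Real.exp (-c * μ^2) := by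
          refine Filter.Eventually.of_forall fun s => ?_
          rw [norm_norm, Function.uncurry, hf]
          rw [Real.norm_eq_abs, abs_of_nonneg (by positivity)]
          have : Real.exp (-(c + s^2) * μ^2) ≤ Real.exp (-c * μ^2) :=
            Real.exp_le_exp.mpr (by nlinarith [sq_nonneg (s*μ)])
          have h2 : (0:ℝ) ≤ 2 * μ ^ (2*n+1) := by positivity
          exact mul_le_mul_of_nonneg_left this h2
        have hB := MeasureTheory.norm_setIntegral_le_of_norm_le_const_ae
          (μ := volume) (s := Set.Ioc (0:ℝ) 1)
          (f := fun s => ‖Function.uncurry f (μ, s)‖)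
          (by simp [Real.volume_Ioc])
          hC
        simpa [Real.volume_Ioc] using hB
  rw [MeasureTheory.integral_integral_swap hInt]
  -- compute inner integral
  have hinner : ∀ s ∈ Set.Ioc (0:ℝ) 1,
      (∫ μ in Set.Ioi (0:ℝ), f μ s) = (n.factorial : ℝ) / (c + s^2) ^ (n+1) := by
    intro s _
    have has : (0:ℝ) < c + s^2 := by positivity
    have : ∀ μ : ℝ, f μ s = 2 * (μ ^ (2*n+1) * Real.exp (-(c + s^2) * μ^2)) := by
      intro μ; rw [hf]; ring
    simp_rw [this]
    rw [MeasureTheory.integral_const_mul, moment n has]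
    field_simp
  rw [setIntegral_congr_fun measurableSet_Ioc hinner]
  -- compute outer integral = RHS
  simp only [hyp2F1half]
  rw [intervalIntegral.integral_of_le zero_le_one, ← MeasureTheory.integral_const_mul]
  apply setIntegral_congr_fun measurableSet_Ioc
  intro s _
  have h1 : (0:ℝ) < 1 + x * s^2 := by positivity
  dsimp only
  rw [show (1 : ℝ) - -x * s^2 = 1 + x * s^2 by ring]
  rw [Real.rpow_neg h1.le, show ((n:ℝ)+1) = ((n+1 : ℕ):ℝ) by push_cast; ring,
    Real.rpow_natCast]
  have hkey : (c + s^2) ^ (n+1) * x ^ (n+1) = (1 + x * s^2) ^ (n+1) := by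
    rw [← mul_pow]
    congr 1
    rw [hc]
    field_simp
  rw [← div_eq_mul_inv, div_eq_div_iff (by positivity) (by positivity), ← hkey]
  ring
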